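/- Monotonicity of the coupled Hamiltonian–transport block: suppose each g_{i,j} is continuously differentiable and convex on ℝ⁴, and let M, M̃ be grid functions with M_{i,j} ≥ 0 and M̃_{i,j} ≥ 0 for all i,j. Then for all grid functions U, Ũ: ⟨g(·,[D_h Ũ]) − g(·,[D_h U]), M − M̃⟩_h + ⟨B_h(U,M) − B_h(Ũ,M̃), U − Ũ⟩_h ≥ 0, where g(·,[D_h W]) denotes the grid function (i,j) ↦ g_{i,j}([D_h W]_{i,j}). If, in addition, each g_{i,j} is strictly convex, M and M̃ are strictly positive componentwise, and [D_h U]_{i,j} ≠ [D_h Ũ]_{i,j} for some node (i,j), then the inequality is strict. -/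

import Mathlib

open scoped BigOperators

/-- Grid functions on the periodic `N × N` grid `(ℤ/Nℤ)²`. -/
abbrev Grid (N : ℕ) : Type := ZMod N → ZMod N → ℝ

/-- Mesh size `h = 1/N`. -/
noncomputable def gridh (N : ℕ) : ℝ := 1 / N

/-- Discrete pairing `⟨a,b⟩_h = h² ∑_{i,j} a_{ij} b_{ij}`. -/
noncomputable def pairh (N : ℕ) [NeZero N] (a b : Grid N) : ℝ :=
  gridh N ^ 2 * ∑ i : ZMod N, ∑ j : ZMod N, a i j * b i j

/-- One-sided difference `(D₁⁺ y)_{ij} = (y_{i+1,j} - y_{ij}) / h`. -/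
noncomputable def D1p (N : ℕ) (y : Grid N) : Grid N := fun i j => (y (i + 1) j - y i j) / gridh N

/-- One-sided difference `(D₁⁻ y)_{ij} = (y_{ij} - y_{i-1,j}) / h`. -/
noncomputable def D1m (N : ℕ) (y : Grid N) : Grid N := fun i j => (y i j - y (i - 1) j) / gridh N

/-- One-sided difference `(D₂⁺ y)_{ij} = (y_{i,j+1} - y_{ij}) / h`. -/
noncomputable def D2p (N : ℕ) (y : Grid N) : Grid N := fun i j => (y i (j + 1) - y i j) / gridh N

/-- One-sided difference `(D₂⁻ y)_{ij} = (y_{ij} - y_{i,j-1}) / h`. -/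
noncomputable def D2m (N : ℕ) (y : Grid N) : Grid N := fun i j => (y i j - y i (j - 1)) / gridh N

/-- Five-point discrete Laplacian. -/
noncomputable def lapFD (N : ℕ) (y : Grid N) : Grid N :=
  fun i j => -(4 * y i j - y (i + 1) j - y (i - 1) j - y i (j + 1) - y i (j - 1)) / gridh N ^ 2

/-- Upwind stencil `[D_h y]_{ij} ∈ ℝ⁴`. -/
noncomputable def DHs (N : ℕ) (y : Grid N) (i j : ZMod N) : Fin 4 → ℝ :=
  ![D1p N y i j, D1m N y i j, D2p N y i j, D2m N y i j]

/-- `α^{(ℓ)}(U)_{ij} = (∂g_{ij}/∂q_ℓ)([D_h U]_{ij})`. -/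
noncomputable def alphaFD (N : ℕ) (g : ZMod N → ZMod N → (Fin 4 → ℝ) → ℝ)
    (U : Grid N) (l : Fin 4) : Grid N :=
  fun i j => fderiv ℝ (g i j) (DHs N U i j) (Pi.single l 1)

/-- Discrete transport operator `B_h(U, M)`. -/
noncomputable def Bh (N : ℕ) (g : ZMod N → ZMod N → (Fin 4 → ℝ) → ℝ) (U M : Grid N) : Grid N :=
  fun i j =>
    -D1m N (fun a b => M a b * alphaFD N g U 0 a b) i j
      - D1p N (fun a b => M a b * alphaFD N g U 1 a b) i j
      - D2m N (fun a b => M a b * alphaFD N g U 2 a b) i j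
      - D2p N (fun a b => M a b * alphaFD N g U 3 a b) i j

/-- HJB residual block `r_k`. -/
noncomputable def rkFD (N : ℕ) (g : ZMod N → ZMod N → (Fin 4 → ℝ) → ℝ) (f : ℝ → ℝ)
    (Vh : Grid N) (ν Δt : ℝ) (M U : ℕ → Grid N) (k : ℕ) : Grid N :=
  fun i j => (U k i j - U (k - 1) i j) / Δt + ν * lapFD N (U (k - 1)) i j
    - g i j (DHs N (U (k - 1)) i j) + f (M k i j) + Vh i j

/-- Fokker–Planck residual block `s_k`. -/
noncomputable def skFD (N : ℕ) (g : ZMod N → ZMod N → (Fin 4 → ℝ) → ℝ)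
    (ν Δt : ℝ) (M U : ℕ → Grid N) (k : ℕ) : Grid N :=
  fun i j => (M k i j - M (k - 1) i j) / Δt - ν * lapFD N (M k) i j
    + Bh N g (U (k - 1)) (M k) i j

/-- `r̄_k = ⟨M_k, r_k⟩_h / ⟨M_k, 1⟩_h`. -/
noncomputable def rbarFD (N : ℕ) [NeZero N] (g : ZMod N → ZMod N → (Fin 4 → ℝ) → ℝ) (f : ℝ → ℝ)
    (Vh : Grid N) (ν Δt : ℝ) (M U : ℕ → Grid N) (k : ℕ) : ℝ :=
  pairh N (M k) (rkFD N g f Vh ν Δt M U k) / pairh N (M k) (fun _ _ => 1)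

/-- Entropy functional `E(Y)`. -/
noncomputable def entE (N : ℕ) [NeZero N] (NT : ℕ) (Δt : ℝ) (M U : ℕ → Grid N) : ℝ :=
  Δt * ∑ k ∈ Finset.Icc 1 NT, pairh N (M k) (fun i j => Real.log (M k i j) - 1)
    + Δt / 2 * ∑ k ∈ Finset.range NT, pairh N (U k) (U k)

/-- Bregman divergence of the entropy, `D_E(Y*, Y)`. -/
noncomputable def DE (N : ℕ) [NeZero N] (NT : ℕ) (Δt : ℝ) (M' U' M U : ℕ → Grid N) : ℝ :=
  entE N NT Δt M' U' - entE N NT Δt M U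
    - (Δt * ∑ k ∈ Finset.Icc 1 NT,
        pairh N (fun i j => Real.log (M k i j)) (fun i j => M' k i j - M k i j)
      + Δt * ∑ k ∈ Finset.range NT, pairh N (U k) (fun i j => U' k i j - U k i j))

/-- The Hessian–Riemannian flow equations on a set `D` of artificial times. -/
def IsHRFOn (N : ℕ) [NeZero N] (NT : ℕ) (g : ZMod N → ZMod N → (Fin 4 → ℝ) → ℝ)
    (f : ℝ → ℝ) (Vh : Grid N) (ν Δt : ℝ)
    (Ms Us : ℝ → ℕ → Grid N) (D : Set ℝ) : Prop :=
  ∀ s ∈ D, ∀ k ∈ Finset.Icc 1 NT,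
    (∀ i j, HasDerivWithinAt (fun t => Ms t k i j)
      (-(Ms s k i j) * (rkFD N g f Vh ν Δt (Ms s) (Us s) k i j
        - rbarFD N g f Vh ν Δt (Ms s) (Us s) k)) D s) ∧
    (∀ i j, HasDerivWithinAt (fun t => Us t (k - 1) i j)
      (-(skFD N g ν Δt (Ms s) (Us s) k i j)) D s)


section Aux

/-- Apply a continuous linear map to a vector via coordinates. -/
lemma clm_apply_eq_sum (L : (Fin 4 → ℝ) →L[ℝ] ℝ) (v : Fin 4 → ℝ) :
    L v = ∑ l : Fin 4, v l * L (Pi.single l 1) := by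
  conv_lhs => rw [pi_eq_sum_univ v, map_sum]
  refine Finset.sum_congr rfl fun l _ => ?_
  have h1 : (fun j => if l = j then (1:ℝ) else 0) = Pi.single l 1 := by
    funext j; simp [Pi.single_apply, eq_comm]
  rw [map_smul, h1, smul_eq_mul]

/-- Tangent line bound for `C¹` convex functions on `ℝ⁴`. -/
lemma tangent_le {g : (Fin 4 → ℝ) → ℝ} (hd : ContDiff ℝ 1 g)
    (hc : ConvexOn ℝ Set.univ g) (x y : Fin 4 → ℝ) :
    fderiv ℝ g x (y - x) ≤ g y - g x := by
  set v := y - x with hv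
  have hg' : HasFDerivAt g (fderiv ℝ g x) x :=
    (hd.differentiable one_ne_zero x).hasFDerivAt
  have hline : HasDerivAt (fun t : ℝ => g (x + t • v)) (fderiv ℝ g x v) 0 := by
    have h1 : HasDerivAt (fun t : ℝ => x + t • v) v 0 := by
      simpa using ((hasDerivAt_id (0:ℝ)).smul_const v).const_add x
    have hg'' : HasFDerivAt g (fderiv ℝ g x) (x + (0:ℝ) • v) := by simpa using hg'
    have h2 := hg''.comp_hasDerivAt 0 h1
    exact h2
  have hφc : ConvexOn ℝ Set.univ (fun t : ℝ => g (x + t • v)) := by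
    refine ⟨convex_univ, fun t _ s _ a b ha hb hab => ?_⟩
    have hkey : a • (x + t • v) + b • (x + s • v) = (a+b) • x + (a • t + b • s) • v := by
      simp only [smul_eq_mul]
      module
    have h3 := hc.2 (Set.mem_univ (x + t • v)) (Set.mem_univ (x + s • v)) ha hb hab
    rw [hkey, hab, one_smul] at h3
    simpa using h3
  have hs := hφc.le_slope_of_hasDerivAt (Set.mem_univ (0:ℝ)) (Set.mem_univ (1:ℝ))
    one_pos hline
  have : slope (fun t : ℝ => g (x + t • v)) 0 1 = g y - g x := by
    simp [slope_def_field, hv]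
  linarith [hs.trans_eq this]

/-- Bregman divergence nonnegativity. -/
lemma breg_nonneg {g : (Fin 4 → ℝ) → ℝ} (hd : ContDiff ℝ 1 g)
    (hc : ConvexOn ℝ Set.univ g) (x y : Fin 4 → ℝ) :
    0 ≤ g y - g x - fderiv ℝ g x (y - x) := by
  linarith [tangent_le hd hc x y]

/-- Strict Bregman divergence positivity. -/
lemma breg_pos {g : (Fin 4 → ℝ) → ℝ} (hd : ContDiff ℝ 1 g)
    (hc : ConvexOn ℝ Set.univ g) (hsc : StrictConvexOn ℝ Set.univ g)
    {x y : Fin 4 → ℝ} (hxy : x ≠ y) :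
    0 < g y - g x - fderiv ℝ g x (y - x) := by
  have hmid := hsc.2 (Set.mem_univ x) (Set.mem_univ y) hxy
    (by norm_num : (0:ℝ) < 1/2) (by norm_num : (0:ℝ) < 1/2) (by norm_num)
  have htan := tangent_le hd hc x ((1/2 : ℝ) • x + (1/2 : ℝ) • y)
  have hmx : ((1/2 : ℝ) • x + (1/2 : ℝ) • y) - x = (1/2 : ℝ) • (y - x) := by module
  rw [hmx, map_smul, smul_eq_mul] at htan
  simp only [smul_eq_mul] at hmid
  linarith

variable {N : ℕ} [NeZero N]

lemma sum_shift (f : ZMod N → ℝ) : ∑ i : ZMod N, f (i + 1) = ∑ i : ZMod N, f i :=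
  Fintype.sum_equiv (Equiv.addRight 1) _ _ (fun _ => rfl)

/-- Summation by parts, backward difference version. -/
lemma sbp_m (a w : ZMod N → ℝ) (c : ℝ) :
    ∑ i : ZMod N, (-((a i - a (i-1))/c)) * w i
      = ∑ i : ZMod N, a i * ((w (i+1) - w i)/c) := by
  have h1 : ∑ i : ZMod N, a (i-1) * w i / c = ∑ i : ZMod N, a i * w (i+1) / c := by
    have := sum_shift (fun i => a (i-1) * w i / c)
    simpa using this.symm
  calc ∑ i : ZMod N, (-((a i - a (i-1))/c)) * w i
      = ∑ i : ZMod N, (a (i-1) * w i / c - a i * w i / c) :=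
        Finset.sum_congr rfl (fun i _ => by ring)
    _ = (∑ i : ZMod N, a (i-1) * w i / c) - ∑ i : ZMod N, a i * w i / c :=
        Finset.sum_sub_distrib _ _
    _ = (∑ i : ZMod N, a i * w (i+1) / c) - ∑ i : ZMod N, a i * w i / c := by rw [h1]
    _ = ∑ i : ZMod N, a i * ((w (i+1) - w i)/c) := by
        rw [← Finset.sum_sub_distrib]
        exact Finset.sum_congr rfl (fun i _ => by ring)

/-- Summation by parts, forward difference version. -/
lemma sbp_p (a w : ZMod N → ℝ) (c : ℝ) :
    ∑ i : ZMod N, (-((a (i+1) - a i)/c)) * w i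
      = ∑ i : ZMod N, a i * ((w i - w (i-1))/c) := by
  have h1 : ∑ i : ZMod N, a (i+1) * w i / c = ∑ i : ZMod N, a i * w (i-1) / c := by
    have := sum_shift (fun i => a i * w (i-1) / c)
    simpa using this
  calc ∑ i : ZMod N, (-((a (i+1) - a i)/c)) * w i
      = ∑ i : ZMod N, (a i * w i / c - a (i+1) * w i / c) :=
        Finset.sum_congr rfl (fun i _ => by ring)
    _ = (∑ i : ZMod N, a i * w i / c) - ∑ i : ZMod N, a (i+1) * w i / c :=
        Finset.sum_sub_distrib _ _
    _ = (∑ i : ZMod N, a i * w i / c) - ∑ i : ZMod N, a i * w (i-1) / c := by rw [h1]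
    _ = ∑ i : ZMod N, a i * ((w i - w (i-1))/c) := by
        rw [← Finset.sum_sub_distrib]
        exact Finset.sum_congr rfl (fun i _ => by ring)

end Aux
section Expand

variable {N : ℕ} [NeZero N]

/-- Summation-by-parts expansion of the transport pairing. -/
lemma Bh_expand (g : ZMod N → ZMod N → (Fin 4 → ℝ) → ℝ) (U M W : Grid N) :
    ∑ i : ZMod N, ∑ j : ZMod N, Bh N g U M i j * W i j
      = ∑ i : ZMod N, ∑ j : ZMod N, M i j *
          (alphaFD N g U 0 i j * D1p N W i j + alphaFD N g U 1 i j * D1m N W i j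
            + alphaFD N g U 2 i j * D2p N W i j + alphaFD N g U 3 i j * D2m N W i j) := by
  set c := gridh N with hc
  set A0 : Grid N := fun a b => M a b * alphaFD N g U 0 a b with hA0
  set A1 : Grid N := fun a b => M a b * alphaFD N g U 1 a b with hA1
  set A2 : Grid N := fun a b => M a b * alphaFD N g U 2 a b with hA2
  set A3 : Grid N := fun a b => M a b * alphaFD N g U 3 a b with hA3
  have e1 : ∑ i : ZMod N, ∑ j : ZMod N, (-((A0 i j - A0 (i-1) j)/c)) * W i j
      = ∑ i : ZMod N, ∑ j : ZMod N, A0 i j * ((W (i+1) j - W i j)/c) := by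
    rw [Finset.sum_comm]
    rw [Finset.sum_congr rfl fun j _ => sbp_m (fun i => A0 i j) (fun i => W i j) c]
    exact Finset.sum_comm
  have e2 : ∑ i : ZMod N, ∑ j : ZMod N, (-((A1 (i+1) j - A1 i j)/c)) * W i j
      = ∑ i : ZMod N, ∑ j : ZMod N, A1 i j * ((W i j - W (i-1) j)/c) := by
    rw [Finset.sum_comm]
    rw [Finset.sum_congr rfl fun j _ => sbp_p (fun i => A1 i j) (fun i => W i j) c]
    exact Finset.sum_comm
  have e3 : ∑ i : ZMod N, ∑ j : ZMod N, (-((A2 i j - A2 i (j-1))/c)) * W i j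
      = ∑ i : ZMod N, ∑ j : ZMod N, A2 i j * ((W i (j+1) - W i j)/c) :=
    Finset.sum_congr rfl fun i _ => sbp_m (fun j => A2 i j) (fun j => W i j) c
  have e4 : ∑ i : ZMod N, ∑ j : ZMod N, (-((A3 i (j+1) - A3 i j)/c)) * W i j
      = ∑ i : ZMod N, ∑ j : ZMod N, A3 i j * ((W i j - W i (j-1))/c) :=
    Finset.sum_congr rfl fun i _ => sbp_p (fun j => A3 i j) (fun j => W i j) c
  calc ∑ i : ZMod N, ∑ j : ZMod N, Bh N g U M i j * W i j
      = ∑ i : ZMod N, ∑ j : ZMod N,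
          ((-((A0 i j - A0 (i-1) j)/c)) * W i j + (-((A1 (i+1) j - A1 i j)/c)) * W i j
            + (-((A2 i j - A2 i (j-1))/c)) * W i j + (-((A3 i (j+1) - A3 i j)/c)) * W i j) := by
        refine Finset.sum_congr rfl fun i _ => Finset.sum_congr rfl fun j _ => ?_
        simp only [Bh, D1m, D1p, D2m, D2p, hA0, hA1, hA2, hA3, hc]
        ring
    _ = (∑ i : ZMod N, ∑ j : ZMod N, (-((A0 i j - A0 (i-1) j)/c)) * W i j)
          + (∑ i : ZMod N, ∑ j : ZMod N, (-((A1 (i+1) j - A1 i j)/c)) * W i j)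
          + (∑ i : ZMod N, ∑ j : ZMod N, (-((A2 i j - A2 i (j-1))/c)) * W i j)
          + (∑ i : ZMod N, ∑ j : ZMod N, (-((A3 i (j+1) - A3 i j)/c)) * W i j) := by
        simp only [Finset.sum_add_distrib]
    _ = (∑ i : ZMod N, ∑ j : ZMod N, A0 i j * ((W (i+1) j - W i j)/c))
          + (∑ i : ZMod N, ∑ j : ZMod N, A1 i j * ((W i j - W (i-1) j)/c))
          + (∑ i : ZMod N, ∑ j : ZMod N, A2 i j * ((W i (j+1) - W i j)/c))
          + (∑ i : ZMod N, ∑ j : ZMod N, A3 i j * ((W i j - W i (j-1))/c)) := by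
        rw [e1, e2, e3, e4]
    _ = ∑ i : ZMod N, ∑ j : ZMod N, M i j *
          (alphaFD N g U 0 i j * D1p N W i j + alphaFD N g U 1 i j * D1m N W i j
            + alphaFD N g U 2 i j * D2p N W i j + alphaFD N g U 3 i j * D2m N W i j) := by
        simp only [← Finset.sum_add_distrib]
        refine Finset.sum_congr rfl fun i _ => Finset.sum_congr rfl fun j _ => ?_
        simp only [D1p, D1m, D2p, D2m, hA0, hA1, hA2, hA3, hc]
        ring

end Expand
/-- monotonicity of the coupled Hamiltonian–transport block. -/
theorem hamiltonian_transport_monotone (N : ℕ) [NeZero N]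
    (g : ZMod N → ZMod N → (Fin 4 → ℝ) → ℝ)
    (hg1 : ∀ i j, ContDiff ℝ 1 (g i j))
    (hg2 : ∀ i j, ConvexOn ℝ Set.univ (g i j))
    (M M' : Grid N) (hM : ∀ i j, 0 ≤ M i j) (hM' : ∀ i j, 0 ≤ M' i j)
    (U U' : Grid N) :
    0 ≤ pairh N (fun i j => g i j (DHs N U' i j) - g i j (DHs N U i j))
          (fun i j => M i j - M' i j)
        + pairh N (fun i j => Bh N g U M i j - Bh N g U' M' i j)
          (fun i j => U i j - U' i j) ∧
    ((∀ i j, StrictConvexOn ℝ Set.univ (g i j)) → (∀ i j, 0 < M i j) → (∀ i j, 0 < M' i j) →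
      (∃ i j, DHs N U i j ≠ DHs N U' i j) →
      0 < pairh N (fun i j => g i j (DHs N U' i j) - g i j (DHs N U i j))
            (fun i j => M i j - M' i j)
          + pairh N (fun i j => Bh N g U M i j - Bh N g U' M' i j)
            (fun i j => U i j - U' i j)) := by
  classical
  set q : ZMod N → ZMod N → Fin 4 → ℝ := fun i j => DHs N U i j with hq
  set q' : ZMod N → ZMod N → Fin 4 → ℝ := fun i j => DHs N U' i j with hq'
  -- the per-node Bregman quantity
  set P : Grid N := fun i j =>
    M i j * (g i j (q' i j) - g i j (q i j)
        - fderiv ℝ (g i j) (q i j) (q' i j - q i j))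
      + M' i j * (g i j (q i j) - g i j (q' i j)
        - fderiv ℝ (g i j) (q' i j) (q i j - q' i j)) with hP
  -- linear functional expansion
  have hA : ∀ (V V' : Grid N) (i j : ZMod N),
      fderiv ℝ (g i j) (DHs N V i j) (DHs N V' i j - DHs N V i j)
        = (D1p N V' i j - D1p N V i j) * alphaFD N g V 0 i j
          + (D1m N V' i j - D1m N V i j) * alphaFD N g V 1 i j
          + (D2p N V' i j - D2p N V i j) * alphaFD N g V 2 i j
          + (D2m N V' i j - D2m N V i j) * alphaFD N g V 3 i j := by
    intro V V' i j
    rw [clm_apply_eq_sum (fderiv ℝ (g i j) (DHs N V i j)) _, Fin.sum_univ_four]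
    simp [DHs, alphaFD]
  -- difference of stencils
  have hW0 : ∀ i j : ZMod N, D1p N (fun a b => U a b - U' a b) i j
      = D1p N U i j - D1p N U' i j := by
    intro i j; simp only [D1p]; ring
  have hW1 : ∀ i j : ZMod N, D1m N (fun a b => U a b - U' a b) i j
      = D1m N U i j - D1m N U' i j := by
    intro i j; simp only [D1m]; ring
  have hW2 : ∀ i j : ZMod N, D2p N (fun a b => U a b - U' a b) i j
      = D2p N U i j - D2p N U' i j := by
    intro i j; simp only [D2p]; ring
  have hW3 : ∀ i j : ZMod N, D2m N (fun a b => U a b - U' a b) i j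
      = D2m N U i j - D2m N U' i j := by
    intro i j; simp only [D2m]; ring
  -- key identity
  have key : pairh N (fun i j => g i j (DHs N U' i j) - g i j (DHs N U i j))
          (fun i j => M i j - M' i j)
        + pairh N (fun i j => Bh N g U M i j - Bh N g U' M' i j)
          (fun i j => U i j - U' i j)
      = gridh N ^ 2 * ∑ i : ZMod N, ∑ j : ZMod N, P i j := by
    rw [pairh, pairh, ← mul_add]
    congr 1
    have hsplit : ∑ i : ZMod N, ∑ j : ZMod N,
          (Bh N g U M i j - Bh N g U' M' i j) * (U i j - U' i j)
        = (∑ i : ZMod N, ∑ j : ZMod N, Bh N g U M i j * (U i j - U' i j))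
          - ∑ i : ZMod N, ∑ j : ZMod N, Bh N g U' M' i j * (U i j - U' i j) := by
      rw [← Finset.sum_sub_distrib]
      refine Finset.sum_congr rfl fun i _ => ?_
      rw [← Finset.sum_sub_distrib]
      exact Finset.sum_congr rfl fun j _ => by ring
    rw [hsplit, Bh_expand g U M (fun a b => U a b - U' a b),
      Bh_expand g U' M' (fun a b => U a b - U' a b)]
    rw [← Finset.sum_sub_distrib, ← Finset.sum_add_distrib]
    refine Finset.sum_congr rfl fun i _ => ?_
    rw [← Finset.sum_sub_distrib, ← Finset.sum_add_distrib]
    refine Finset.sum_congr rfl fun j _ => ?_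
    simp only [hP, hq, hq', hA U U' i j, hA U' U i j, hW0 i j, hW1 i j, hW2 i j, hW3 i j]
    ring
  have hbreg1 : ∀ i j : ZMod N,
      0 ≤ g i j (q' i j) - g i j (q i j) - fderiv ℝ (g i j) (q i j) (q' i j - q i j) :=
    fun i j => breg_nonneg (hg1 i j) (hg2 i j) _ _
  have hbreg2 : ∀ i j : ZMod N,
      0 ≤ g i j (q i j) - g i j (q' i j) - fderiv ℝ (g i j) (q' i j) (q i j - q' i j) :=
    fun i j => breg_nonneg (hg1 i j) (hg2 i j) _ _
  have hPnn : ∀ i j : ZMod N, 0 ≤ P i j := fun i j =>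
    add_nonneg (mul_nonneg (hM i j) (hbreg1 i j)) (mul_nonneg (hM' i j) (hbreg2 i j))
  constructor
  · rw [key]
    exact mul_nonneg (sq_nonneg _)
      (Finset.sum_nonneg fun i _ => Finset.sum_nonneg fun j _ => hPnn i j)
  · rintro hsc hMp hM'p ⟨i0, j0, hne⟩
    rw [key]
    have hNpos : (0:ℝ) < N := by
      exact_mod_cast Nat.pos_of_ne_zero (NeZero.ne N)
    have hcpos : 0 < gridh N ^ 2 := by
      rw [gridh]; positivity
    refine mul_pos hcpos ?_
    have hP0 : 0 < P i0 j0 := by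
      have h1 := breg_pos (hg1 i0 j0) (hg2 i0 j0) (hsc i0 j0) (x := q i0 j0) (y := q' i0 j0) hne
      have h2 := breg_pos (hg1 i0 j0) (hg2 i0 j0) (hsc i0 j0) (x := q' i0 j0) (y := q i0 j0)
        (Ne.symm hne)
      exact add_pos (mul_pos (hMp i0 j0) h1) (mul_pos (hM'p i0 j0) h2)
    refine Finset.sum_pos' (fun i _ => Finset.sum_nonneg fun j _ => hPnn i j)
      ⟨i0, Finset.mem_univ i0, ?_⟩
    exact Finset.sum_pos' (fun j _ => hPnn i0 j) ⟨j0, Finset.mem_univ j0, hP0⟩
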